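/- arXiv:2103.11037 — 2 statements merged into one kernel-verified Lean document; each statement's English description precedes it below -/
import Mathlib

section
/- Let 𝒜 ∈ ℝ^{d₁×⋯×dₙ} be a tensor with multilinear rank (r₁,…,rₙ). Let I_i ⊆ [d_i] and J_i ⊆ [∏_{j≠i} d_j], and set C_i = 𝒜_(i)(:,J_i) and U_i = C_i(I_i,:). If rank(U_i) = r_i for all i = 1,…,n, then 𝒜 = 𝒜 ×₁ (C₁C₁†) ×₂ ⋯ ×ₙ (CₙCₙ†). -/
open scoped BigOperators
open Matrix

noncomputable section

namespace TCUR

/-- Euclidean norm of a finite real vector. -/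
def enorm {ι : Type*} [Fintype ι] (x : ι → ℝ) : ℝ :=
  Real.sqrt (∑ i, x i ^ 2)

/-- Frobenius norm of a real matrix. -/
def frob {m n : Type*} [Fintype m] [Fintype n] (A : Matrix m n ℝ) : ℝ :=
  Real.sqrt (∑ i, ∑ j, A i j ^ 2)

/-- Spectral norm of a real matrix. -/
def spec {m n : Type*} [Fintype m] [Fintype n] (A : Matrix m n ℝ) : ℝ :=
  sSup ((fun x => enorm (A.mulVec x)) '' {x : n → ℝ | enorm x ≤ 1})

/-- The four Penrose conditions: `B` is the Moore–Penrose pseudoinverse of `A`. -/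
def IsMP {m n : Type*} [Fintype m] [Fintype n] (A : Matrix m n ℝ) (B : Matrix n m ℝ) : Prop :=
  A * B * A = A ∧ B * A * B = B ∧ (A * B)ᵀ = A * B ∧ (B * A)ᵀ = B * A

open Classical in
/-- Moore–Penrose pseudoinverse of a real matrix (def body). -/
def pinv {m n : Type*} [Fintype m] [Fintype n] (A : Matrix m n ℝ) : Matrix n m ℝ :=
  if h : ∃ B, IsMP A B then h.choose else 0

/-- `sval k A` is the `k`-th largest singular value of `A`
(via the Eckart–Young characterization). -/
def sval {m n : Type*} [Fintype m] [Fintype n] (k : ℕ) (A : Matrix m n ℝ) : ℝ :=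
  sInf ((fun B => spec (A - B)) '' {B : Matrix m n ℝ | B.rank < k})

/-- `IsBestRank r A Ar`: `Ar` is a best rank-`r` (Frobenius) approximation of `A`,
 e.g. a rank-`r` truncated SVD of `A`. -/
def IsBestRank {m n : Type*} [Fintype m] [Fintype n] (r : ℕ) (A Ar : Matrix m n ℝ) : Prop :=
  Ar.rank ≤ r ∧ ∀ B : Matrix m n ℝ, B.rank ≤ r → frob (A - Ar) ≤ frob (A - B)

/-- Compact SVD data: `A = W * S * Vᵀ` with `W, V` having orthonormal columns and
`S` diagonal with positive diagonal entries. -/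
def CompactSVD {m n : Type*} [Fintype m] [Fintype n] {r : ℕ} (A : Matrix m n ℝ)
    (W : Matrix m (Fin r) ℝ) (S : Matrix (Fin r) (Fin r) ℝ) (V : Matrix n (Fin r) ℝ) : Prop :=
  A = W * S * Vᵀ ∧ Wᵀ * W = 1 ∧ Vᵀ * V = 1 ∧ (∀ i j, i ≠ j → S i j = 0) ∧ ∀ i, 0 < S i i

/-- Coherence `μ(W) = (d/r) max_i ‖W(i,:)‖₂²` of a matrix with orthonormal columns. -/
def coh {m r : Type*} [Fintype m] [Fintype r] (W : Matrix m r ℝ) : ℝ :=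
  ((Fintype.card m : ℝ) / (Fintype.card r : ℝ)) * ⨆ i : m, ∑ j, W i j ^ 2

/-- Row submatrix with rows restricted to `I`. -/
def rowsub {m k : Type*} (M : Matrix m k ℝ) (I : Finset m) : Matrix {x // x ∈ I} k ℝ :=
  M.submatrix Subtype.val id

/-- Probability, with respect to the uniform distribution on the finite sample space
`{ω : Ω | cond ω}`, of the event `{ω | event ω}`. -/
def uniformProb {Ω : Type*} [Fintype Ω] (cond event : Ω → Prop) : ℝ :=
  (Nat.card {ω : Ω // cond ω ∧ event ω} : ℝ) / (Nat.card {ω : Ω // cond ω} : ℝ)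

variable {n : ℕ}

/-- Mode-`k` unfolding of an `n`-mode tensor: the matrix whose columns are the
mode-`k` fibers of the tensor. -/
def unfold {ι : Fin n → Type*} (A : ((i : Fin n) → ι i) → ℝ) (k : Fin n) :
    Matrix (ι k) ((j : {j : Fin n // j ≠ k}) → ι j.1) ℝ :=
  fun x y => A fun i => if h : i = k then cast (congrArg ι h.symm) x else y ⟨i, h⟩

/-- Tucker (all-modes) product `T ×₁ M 1 ×₂ ⋯ ×ₙ M n`. -/
def tucker {ι κ : Fin n → Type*} [∀ i, Fintype (κ i)]
    (T : ((i : Fin n) → κ i) → ℝ) (M : (i : Fin n) → Matrix (ι i) (κ i) ℝ) :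
    ((i : Fin n) → ι i) → ℝ :=
  fun x => ∑ y : (i : Fin n) → κ i, (∏ i, M i (x i) (y i)) * T y

/-- The subtensor with mode-`i` indices restricted to `I i`. -/
def subT {ι : Fin n → Type*} (A : ((i : Fin n) → ι i) → ℝ)
    (I : (i : Fin n) → Finset (ι i)) : ((i : Fin n) → {x // x ∈ I i}) → ℝ :=
  fun x => A fun i => (x i).1

/-- Frobenius norm of a tensor. -/
def tfrob {ι : Fin n → Type*} [∀ i, Fintype (ι i)] (A : ((i : Fin n) → ι i) → ℝ) : ℝ :=
  Real.sqrt (∑ x : (i : Fin n) → ι i, A x ^ 2)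

/-- `Cmat A J i = 𝒜_(i)(:,J_i)`: the mode-`i` unfolding restricted to the columns `J i`. -/
def Cmat {ι : Fin n → Type*} (A : ((i : Fin n) → ι i) → ℝ)
    (J : (i : Fin n) → Finset ((j : {j : Fin n // j ≠ i}) → ι j.1)) (i : Fin n) :
    Matrix (ι i) {y // y ∈ J i} ℝ :=
  (unfold A i).submatrix id Subtype.val

/-- `Umat A I J i = 𝒜_(i)(I_i,J_i)`. -/
def Umat {ι : Fin n → Type*} (A : ((i : Fin n) → ι i) → ℝ)
    (I : (i : Fin n) → Finset (ι i))
    (J : (i : Fin n) → Finset ((j : {j : Fin n // j ≠ i}) → ι j.1)) (i : Fin n) :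
    Matrix {x // x ∈ I i} {y // y ∈ J i} ℝ :=
  (unfold A i).submatrix Subtype.val Subtype.val

/-- The Chidori column index set `⊗_{j ≠ i} I j`. -/
def chidoriJ {ι : Fin n → Type*} (I : (i : Fin n) → Finset (ι i)) (i : Fin n) :
    Finset ((j : {j : Fin n // j ≠ i}) → ι j.1) :=
  Fintype.piFinset fun j => I j.1

/-- `σ_max(𝒜) = max_j σ₁(𝒜_(j))`. -/
def tsmax {ι : Fin n → Type*} [∀ i, Fintype (ι i)] (A : ((i : Fin n) → ι i) → ℝ) : ℝ :=
  ⨆ j, sval 1 (unfold A j)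

/-- `σ_min(𝒜) = min_j σ_{r_j}(𝒜_(j))`. -/
def tsmin {ι : Fin n → Type*} [∀ i, Fintype (ι i)] (A : ((i : Fin n) → ι i) → ℝ)
    (r : Fin n → ℕ) : ℝ :=
  ⨅ j, sval (r j) (unfold A j)


section MatrixLemmas
set_option linter.unusedSectionVars false
variable {m n k : Type*} [Fintype m] [Fintype n] [Fintype k]

/-- Rank factorization. -/
lemma exists_rank_fact (A : Matrix m n ℝ) :
    ∃ (r : ℕ) (F : Matrix m (Fin r) ℝ) (G : Matrix (Fin r) n ℝ),
      A = F * G ∧ LinearIndependent ℝ (fun j => Fᵀ j) ∧ A.rank = r := by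
  classical
  set V := LinearMap.range A.mulVecLin with hV
  have hfr : Module.finrank ℝ V = A.rank := rfl
  let b : Module.Basis (Fin A.rank) ℝ V := Module.finBasisOfFinrankEq ℝ V hfr
  have hmem : ∀ k, Aᵀ k ∈ V := by
    intro k
    exact ⟨Pi.single k 1, Matrix.mulVec_single_one A k⟩
  refine ⟨A.rank, fun i j => (b j : m → ℝ) i, fun j k => b.repr ⟨Aᵀ k, hmem k⟩ j, ?_, ?_, rfl⟩
  · ext i k
    have h1 := b.sum_repr ⟨Aᵀ k, hmem k⟩
    have h2 := congrArg (fun v : V => (v : m → ℝ) i) h1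
    simp only [AddSubmonoidClass.coe_finset_sum, Finset.sum_apply, SetLike.val_smul,
      Pi.smul_apply, smul_eq_mul] at h2
    show A i k = ∑ j, (b j : m → ℝ) i * b.repr ⟨Aᵀ k, hmem k⟩ j
    have h3 : Aᵀ k i = A i k := rfl
    rw [← h3, ← h2]
    exact Finset.sum_congr rfl fun j _ => mul_comm _ _
  · have : (fun j => (fun i j => (b j : m → ℝ) i)ᵀ j) = fun j => ((V.subtype : V →ₗ[ℝ] (m → ℝ)) (b j)) := by
      funext j; rfl
    rw [this]
    exact b.linearIndependent.map' V.subtype (Submodule.ker_subtype V)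

lemma exists_isMP (A : Matrix m n ℝ) : ∃ B, IsMP A B := by
  classical
  obtain ⟨r, F, G, rfl, hInd, hr⟩ := exists_rank_fact A
  -- F has injective mulVec
  have hFinj : Function.Injective F.mulVec := Matrix.mulVec_injective_iff.mpr hInd
  have hFtF : IsUnit (Fᵀ * F) := by
    rw [← Matrix.mulVec_injective_iff_isUnit]
    have hker : LinearMap.ker (Fᵀ * F).mulVecLin = ⊥ := by
      rw [Matrix.ker_mulVecLin_transpose_mul_self]
      exact LinearMap.ker_eq_bot.mpr hFinj
    intro x y hxy
    have : (Fᵀ * F).mulVecLin x = (Fᵀ * F).mulVecLin y := hxy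
    exact LinearMap.ker_eq_bot.mp hker this
  -- G has full row rank
  have hrG : G.rank = r := by
    refine le_antisymm (G.rank_le_card_height.trans_eq (Fintype.card_fin _)) ?_
    exact le_trans (le_of_eq hr.symm) (Matrix.rank_mul_le_right F G)
  have hGt_inj : Function.Injective Gᵀ.mulVec := by
    have hrGt : Gᵀ.rank = r := by rw [Matrix.rank_transpose]; exact hrG
    have hker : LinearMap.ker Gᵀ.mulVecLin = ⊥ := by
      have hrn := LinearMap.finrank_range_add_finrank_ker Gᵀ.mulVecLin
      have hfr : Module.finrank ℝ (LinearMap.range Gᵀ.mulVecLin) = r := hrGt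
      rw [hfr, Module.finrank_pi, Fintype.card_fin] at hrn
      have : Module.finrank ℝ (LinearMap.ker Gᵀ.mulVecLin) = 0 := by omega
      exact Submodule.finrank_eq_zero.mp this
    intro x y hxy
    exact LinearMap.ker_eq_bot.mp hker (show Gᵀ.mulVecLin x = Gᵀ.mulVecLin y from hxy)
  have hGGt : IsUnit (G * Gᵀ) := by
    rw [← Matrix.mulVec_injective_iff_isUnit]
    have hker : LinearMap.ker (G * Gᵀ).mulVecLin = ⊥ := by
      have h1 : G * Gᵀ = Gᵀᵀ * Gᵀ := by rw [Matrix.transpose_transpose]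
      rw [h1, Matrix.ker_mulVecLin_transpose_mul_self]
      exact LinearMap.ker_eq_bot.mpr hGt_inj
    intro x y hxy
    exact LinearMap.ker_eq_bot.mp hker (show (G * Gᵀ).mulVecLin x = (G * Gᵀ).mulVecLin y from hxy)
  set P := (Fᵀ * F)⁻¹ with hP
  set Q := (G * Gᵀ)⁻¹ with hQ
  have hPl : P * (Fᵀ * F) = 1 := Matrix.nonsing_inv_mul _ (Matrix.isUnit_iff_isUnit_det _ |>.mp hFtF)
  have hQr : (G * Gᵀ) * Q = 1 := Matrix.mul_nonsing_inv _ (Matrix.isUnit_iff_isUnit_det _ |>.mp hGGt)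
  have hPt : Pᵀ = P := by
    rw [hP, Matrix.transpose_nonsing_inv, Matrix.transpose_mul, Matrix.transpose_transpose]
  have hQt : Qᵀ = Q := by
    rw [hQ, Matrix.transpose_nonsing_inv, Matrix.transpose_mul, Matrix.transpose_transpose]
  refine ⟨Gᵀ * Q * P * Fᵀ, ?_, ?_, ?_, ?_⟩
  · calc F * G * (Gᵀ * Q * P * Fᵀ) * (F * G)
        = F * ((G * Gᵀ) * Q) * ((P * (Fᵀ * F)) * G) := by
          simp only [Matrix.mul_assoc]
    _ = F * G := by rw [hQr, hPl, Matrix.mul_one, Matrix.one_mul]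
  · calc (Gᵀ * Q * P * Fᵀ) * (F * G) * (Gᵀ * Q * P * Fᵀ)
        = Gᵀ * (Q * ((P * (Fᵀ * F)) * (((G * Gᵀ) * Q) * (P * Fᵀ)))) := by
          simp only [Matrix.mul_assoc]
    _ = Gᵀ * Q * P * Fᵀ := by
          rw [hPl, hQr, Matrix.one_mul, Matrix.one_mul]; simp only [Matrix.mul_assoc]
  · have hAB : F * G * (Gᵀ * Q * P * Fᵀ) = F * (P * Fᵀ) := by
      calc F * G * (Gᵀ * Q * P * Fᵀ) = F * (((G * Gᵀ) * Q) * (P * Fᵀ)) := by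
            simp only [Matrix.mul_assoc]
      _ = F * (P * Fᵀ) := by rw [hQr, Matrix.one_mul]
    rw [hAB, Matrix.transpose_mul, Matrix.transpose_mul, Matrix.transpose_transpose, hPt,
      Matrix.mul_assoc]
  · have hBA : (Gᵀ * Q * P * Fᵀ) * (F * G) = Gᵀ * (Q * G) := by
      calc (Gᵀ * Q * P * Fᵀ) * (F * G) = Gᵀ * (Q * ((P * (Fᵀ * F)) * G)) := by
            simp only [Matrix.mul_assoc]
      _ = Gᵀ * (Q * G) := by rw [hPl, Matrix.one_mul]
    rw [hBA, Matrix.transpose_mul, Matrix.transpose_mul, Matrix.transpose_transpose, hQt,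
      Matrix.mul_assoc]


lemma isMP_pinv (A : Matrix m n ℝ) : IsMP A (pinv A) := by
  have h := exists_isMP A
  rw [pinv, dif_pos h]
  exact h.choose_spec

/-- general submatrix rank bound -/
lemma rank_submatrix_le_gen {m' n' : Type*} [Fintype m'] [Fintype n']
    (A : Matrix m n ℝ) (f : m' → m) (g : n' → n) :
    (A.submatrix f g).rank ≤ A.rank := by
  classical
  have h1 : A.submatrix f g =
      (Matrix.of fun i j => if f i = j then (1:ℝ) else 0) * A *
      (Matrix.of fun j l => if j = g l then (1:ℝ) else 0) := by
    ext i l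
    simp only [Matrix.mul_apply, Matrix.of_apply, Matrix.submatrix_apply]
    simp [ite_mul, mul_ite, Finset.sum_ite_eq, Finset.sum_ite_eq']
  calc (A.submatrix f g).rank
      ≤ ((Matrix.of fun i j => if f i = j then (1:ℝ) else 0) * A).rank := by
        rw [h1]; exact Matrix.rank_mul_le_left _ _
  _ ≤ A.rank := Matrix.rank_mul_le_right _ _

/-- If every column of M lies in the column space of C, then C C† M = M. -/
lemma proj_cols (C : Matrix m k ℝ) (M : Matrix m n ℝ)
    (h : ∀ j, Mᵀ j ∈ LinearMap.range C.mulVecLin) :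
    C * pinv C * M = M := by
  classical
  choose X hX using fun j => h j
  have hM : M = C * (Matrix.of fun a j => X j a) := by
    ext i j
    have := congrFun (hX j) i
    simp only [Matrix.mulVecLin_apply] at this
    rw [show M i j = Mᵀ j i from rfl, ← this]
    simp [Matrix.mul_apply, Matrix.mulVec, dotProduct]
  have hmp := isMP_pinv C
  calc C * pinv C * M = C * pinv C * C * (Matrix.of fun a j => X j a) := by
        rw [hM, ← Matrix.mul_assoc]
  _ = M := by rw [hmp.1, ← hM]


end MatrixLemmas

section Tucker
variable {n : ℕ}
variable {d : Fin n → ℕ}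

/-- insert value `z` at mode `a`, other modes from `w`. -/
def emb (a : Fin n) (z : Fin (d a)) (w : (j : {j : Fin n // j ≠ a}) → Fin (d j.1)) :
    (i : Fin n) → Fin (d i) :=
  fun i => if h : i = a then cast (congrArg (fun i => Fin (d i)) h.symm) z else w ⟨i, h⟩

lemma emb_self (a : Fin n) (z w) : emb (d := d) a z w a = z := by
  simp [emb]

lemma emb_ne (a : Fin n) (z w) {i : Fin n} (h : i ≠ a) :
    emb (d := d) a z w i = w ⟨i, h⟩ := dif_neg h

lemma emb_eta (a : Fin n) (x : (i : Fin n) → Fin (d i)) :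
    emb a (x a) (fun j => x j.1) = x := by
  funext i
  by_cases h : i = a
  · subst h; simp [emb]
  · simp [emb, h]

lemma unfold_apply (A : ((i : Fin n) → Fin (d i)) → ℝ) (a : Fin n) (z w) :
    unfold A a z w = A (emb a z w) := rfl

lemma sum_emb (a : Fin n) (F : ((i : Fin n) → Fin (d i)) → ℝ) :
    ∑ y, F y = ∑ z : Fin (d a), ∑ w : (j : {j : Fin n // j ≠ a}) → Fin (d j.1),
      F (emb a z w) := by
  have hbij : Function.Bijective
      (fun p : Fin (d a) × ((j : {j : Fin n // j ≠ a}) → Fin (d j.1)) => emb a p.1 p.2) := by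
    constructor
    · rintro ⟨z, w⟩ ⟨z', w'⟩ hzw
      have hzw' : emb a z w = emb a z' w' := hzw
      have h1 : z = z' := by
        have := congrFun hzw' a; rwa [emb_self, emb_self] at this
      have h2 : w = w' := by
        funext j
        have := congrFun hzw' j.1
        rw [emb_ne a z w j.2, emb_ne a z' w' j.2] at this
        exact this
      simp [h1, h2]
    · intro y
      exact ⟨⟨y a, fun j => y j.1⟩, emb_eta a y⟩
  calc ∑ y, F y
      = ∑ p : Fin (d a) × ((j : {j : Fin n // j ≠ a}) → Fin (d j.1)), F (emb a p.1 p.2) :=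
        (Fintype.sum_bijective _ hbij _ _ (fun p => rfl)).symm
  _ = ∑ z : Fin (d a), ∑ w, F (emb a z w) := Fintype.sum_prod_type (fun p => F (emb a p.1 p.2))

lemma prod_split (a : Fin n) (W : (i : Fin n) → Fin (d i) → ℝ) (z w) :
    (∏ i, W i (emb a z w i)) = W a z * ∏ j : {j : Fin n // j ≠ a}, W j.1 (w j) := by
  classical
  rw [Fintype.prod_eq_mul_prod_compl a, emb_self]
  congr 1
  rw [Finset.prod_subtype (p := fun i => i ≠ a) ({a}ᶜ : Finset (Fin n)) (fun i => by simp)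
    (fun i => W i (emb a z w i))]
  exact Fintype.prod_congr _ _ fun j => by rw [emb_ne a z w j.2]

lemma split_sum (a : Fin n) (A : ((i : Fin n) → Fin (d i)) → ℝ)
    (W : (i : Fin n) → Fin (d i) → ℝ) :
    ∑ y, (∏ i, W i (y i)) * A y
      = ∑ z, W a z * ∑ w, (∏ j : {j : Fin n // j ≠ a}, W j.1 (w j)) * A (emb a z w) := by
  rw [sum_emb a]
  refine Finset.sum_congr rfl fun z _ => ?_
  rw [Finset.mul_sum]
  refine Finset.sum_congr rfl fun w _ => ?_
  rw [prod_split a W z w]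
  ring

lemma proj_inner (a : Fin n) (A : ((i : Fin n) → Fin (d i)) → ℝ)
    (P : Matrix (Fin (d a)) (Fin (d a)) ℝ)
    (hP : ∀ z w, ∑ t, P z t * A (emb a t w) = A (emb a z w))
    (c : ((j : {j : Fin n // j ≠ a}) → Fin (d j.1)) → ℝ) (x : Fin (d a)) :
    ∑ z, P x z * ∑ w, c w * A (emb a z w) = ∑ w, c w * A (emb a x w) := by
  calc ∑ z, P x z * ∑ w, c w * A (emb a z w)
      = ∑ z, ∑ w, c w * (P x z * A (emb a z w)) := by
        refine Finset.sum_congr rfl fun z _ => ?_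
        rw [Finset.mul_sum]
        exact Finset.sum_congr rfl fun w _ => by ring
  _ = ∑ w, ∑ z, c w * (P x z * A (emb a z w)) := Finset.sum_comm
  _ = ∑ w, c w * A (emb a x w) := by
        refine Finset.sum_congr rfl fun w _ => ?_
        rw [← Finset.mul_sum, hP x w]

lemma tucker_eq_self (A : ((i : Fin n) → Fin (d i)) → ℝ)
    (P : (i : Fin n) → Matrix (Fin (d i)) (Fin (d i)) ℝ)
    (h : ∀ i, P i * unfold A i = unfold A i) : tucker A P = A := by
  classical
  have key : ∀ (S : Finset (Fin n)) (x : (i : Fin n) → Fin (d i)),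
      ∑ y, (∏ i, if i ∈ S then P i (x i) (y i) else if y i = x i then 1 else 0) * A y
        = A x := by
    intro S
    induction S using Finset.induction_on with
    | empty =>
      intro x
      have hy : ∀ y : (i : Fin n) → Fin (d i),
          (∏ i, if (i : Fin n) ∈ (∅ : Finset (Fin n)) then P i (x i) (y i)
            else if y i = x i then (1:ℝ) else 0) = if y = x then 1 else 0 := by
        intro y
        by_cases hyx : y = x
        · subst hyx; simp
        · obtain ⟨i, hi⟩ := Function.ne_iff.mp hyx
          rw [if_neg hyx]
          exact Finset.prod_eq_zero (Finset.mem_univ i) (by simp [hi])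
      simp only [hy, ite_mul, one_mul, zero_mul]
      rw [Finset.sum_ite_eq' Finset.univ x A]
      simp
    | @insert a S ha IH =>
      intro x
      have hkey : ∀ z w, ∑ t, P a z t * A (emb a t w) = A (emb a z w) := by
        intro z w
        have := congrFun (congrFun (h a) z) w
        rw [Matrix.mul_apply] at this
        exact this
      have hL : ∑ y, (∏ i, if i ∈ insert a S then P i (x i) (y i)
            else if y i = x i then 1 else 0) * A y
          = ∑ z, P a (x a) z * ∑ w, (∏ j : {j : Fin n // j ≠ a},
              if (j : Fin n) ∈ S then P j.1 (x j.1) (w j) else if w j = x j.1 then 1 else 0) *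
              A (emb a z w) := by
        refine (split_sum a A
          (fun i t => if i ∈ insert a S then P i (x i) t else if t = x i then 1 else 0)).trans ?_
        refine Finset.sum_congr rfl fun z _ => ?_
        rw [if_pos (Finset.mem_insert_self a S)]
        congr 1
        refine Finset.sum_congr rfl fun w _ => ?_
        congr 1
        refine Finset.prod_congr rfl fun j _ => ?_
        have : (j : Fin n) ∈ insert a S ↔ (j : Fin n) ∈ S := by
          rw [Finset.mem_insert]
          exact or_iff_right j.2
        simp only [this]
      have hR : A x = ∑ w, (∏ j : {j : Fin n // j ≠ a},
            if (j : Fin n) ∈ S then P j.1 (x j.1) (w j) else if w j = x j.1 then 1 else 0) *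
            A (emb a (x a) w) := by
        have h2 := (split_sum a A
          (fun i t => if i ∈ S then P i (x i) t else if t = x i then 1 else 0)).symm.trans (IH x)
        rw [← h2]
        simp only [ha, if_false, ite_mul, one_mul, zero_mul]
        rw [Finset.sum_ite_eq' Finset.univ (x a)]
        simp
      rw [hL, hR]
      exact proj_inner a A (P a) hkey _ (x a)
  funext x
  have hx := key Finset.univ x
  rw [← hx]
  simp only [tucker, Finset.mem_univ, if_true]

end Tucker

/-- If `rank Uᵢ = rᵢ` for all `i`, then `A = A ×₁ (C₁C₁†) ×₂ ⋯ ×ₙ (CₙCₙ†)`. -/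
theorem fiber_cur_projection {n : ℕ} {d : Fin n → ℕ}
    (A : ((i : Fin n) → Fin (d i)) → ℝ) (r : Fin n → ℕ)
    (hrank : ∀ i, (unfold A i).rank = r i)
    (I : (i : Fin n) → Finset (Fin (d i)))
    (J : (i : Fin n) → Finset ((j : {j : Fin n // j ≠ i}) → Fin (d j.1)))
    (hU : ∀ i, (Umat A I J i).rank = r i) :
    A = tucker A fun i => Cmat A J i * pinv (Cmat A J i) := by
  classical
  refine (tucker_eq_self A _ fun i => ?_).symm
  set M := unfold A i with hM
  set C := Cmat A J i with hC
  have hCsub : C = M.submatrix id Subtype.val := rfl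
  have hCle : C.rank ≤ M.rank := by
    rw [hCsub]; exact rank_submatrix_le_gen M id Subtype.val
  have hUle : (Umat A I J i).rank ≤ C.rank := by
    have : Umat A I J i = C.submatrix Subtype.val id := rfl
    rw [this]; exact rank_submatrix_le_gen C Subtype.val id
  have hCr : C.rank = r i := le_antisymm (hCle.trans_eq (hrank i)) ((hU i) ▸ hUle)
  have hrange : LinearMap.range C.mulVecLin = LinearMap.range M.mulVecLin := by
    refine Submodule.eq_of_le_of_finrank_le ?_ ?_
    · rw [Matrix.range_mulVecLin, Matrix.range_mulVecLin]
      refine Submodule.span_mono ?_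
      rintro _ ⟨j, rfl⟩
      exact ⟨j.1, rfl⟩
    · have h1 : Module.finrank ℝ (LinearMap.range M.mulVecLin) = r i := hrank i
      have h2 : Module.finrank ℝ (LinearMap.range C.mulVecLin) = r i := hCr
      rw [h1, h2]
  have hmem : ∀ j, Mᵀ j ∈ LinearMap.range C.mulVecLin := by
    intro j
    rw [hrange]
    exact ⟨Pi.single j 1, Matrix.mulVec_single_one M j⟩
  exact proj_cols C M hmem

end TCUR
end
end

section
/- Let 𝒜 ∈ ℝ^{d₁×⋯×dₙ} have multilinear rank (r₁,…,rₙ), with HOSVD 𝒜 = 𝒯 ×₁ W₁ ×₂ ⋯ ×ₙ Wₙ, where W_i is the matrix of left singular vectors of 𝒜_(i). Let I_i ⊆ [d_i] and ℛ = 𝒜(I₁,…,Iₙ). Then for each i, ‖ℛ_(i)‖₂ ≤ σ_max(𝒜) · ∏_{j=1}ⁿ ‖W_j(I_j,:)‖₂, where σ_max(𝒜) = max_j σ₁(𝒜_(j)). -/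
open scoped BigOperators
open Matrix

noncomputable section

namespace TCUR

variable {n : ℕ}

section SpecLemmas
variable {ι m n p : Type*} [Fintype ι] [Fintype m] [Fintype n] [Fintype p]

lemma enorm_nonneg (x : ι → ℝ) : 0 ≤ enorm x := Real.sqrt_nonneg _

lemma enorm_sq (x : ι → ℝ) : enorm x ^ 2 = ∑ i, x i ^ 2 := by
  rw [enorm, Real.sq_sqrt]
  positivity

lemma enorm_le_iff {x : ι → ℝ} {c : ℝ} (hc : 0 ≤ c) :
    enorm x ≤ c ↔ ∑ i, x i ^ 2 ≤ c ^ 2 := by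
  constructor
  · intro h
    calc ∑ i, x i ^ 2 = enorm x ^ 2 := (enorm_sq x).symm
    _ ≤ c ^ 2 := by apply pow_le_pow_left₀ (enorm_nonneg x) h
  · intro h
    have := Real.sqrt_le_sqrt h
    rwa [Real.sqrt_sq hc] at this
  
lemma enorm_zero : enorm (0 : ι → ℝ) = 0 := by simp [enorm]

lemma enorm_eq_zero {x : ι → ℝ} (h : enorm x = 0) : x = 0 := by
  have h2 : ∑ i, x i ^ 2 = 0 := by rw [← enorm_sq, h]; ring
  funext i
  have := (Finset.sum_eq_zero_iff_of_nonneg (by intro i _; positivity)).mp h2 i (Finset.mem_univ i)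
  have : x i = 0 := by nlinarith
  simpa using this

lemma enorm_smul (c : ℝ) (x : ι → ℝ) : enorm (c • x) = |c| * enorm x := by
  simp only [enorm, Pi.smul_apply, smul_eq_mul, mul_pow, ← Finset.mul_sum]
  rw [Real.sqrt_mul (by positivity), Real.sqrt_sq_eq_abs]

lemma frob_nonneg (A : Matrix m n ℝ) : 0 ≤ frob A := Real.sqrt_nonneg _

lemma dot_mulVec (v : m → ℝ) (A : Matrix m n ℝ) (w : n → ℝ) :
    v ⬝ᵥ A.mulVec w = (Aᵀ.mulVec v) ⬝ᵥ w := by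
  simp only [dotProduct, Matrix.mulVec, Matrix.transpose_apply, Finset.mul_sum,
    Finset.sum_mul]
  rw [Finset.sum_comm]
  exact Finset.sum_congr rfl fun i _ => Finset.sum_congr rfl fun j _ => by ring

/-- Cauchy–Schwarz for `dotProduct`. -/
lemma dot_le (x y : ι → ℝ) : x ⬝ᵥ y ≤ enorm x * enorm y := by
  have h := Finset.sum_mul_sq_le_sq_mul_sq Finset.univ x y
  have h1 : x ⬝ᵥ y ≤ |x ⬝ᵥ y| := le_abs_self _
  have h2 : |x ⬝ᵥ y| = Real.sqrt ((x ⬝ᵥ y) ^ 2) := (Real.sqrt_sq_eq_abs _).symm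
  rw [h2] at h1
  refine h1.trans ?_
  rw [enorm, enorm, ← Real.sqrt_mul (by positivity)]
  exact Real.sqrt_le_sqrt h

lemma enorm_mulVec_le_frob (A : Matrix m n ℝ) (x : n → ℝ) :
    enorm (A.mulVec x) ≤ frob A * enorm x := by
  rw [enorm_le_iff (mul_nonneg (frob_nonneg A) (enorm_nonneg x)), mul_pow, frob,
    Real.sq_sqrt (by positivity),
    enorm_sq, Finset.sum_mul]
  apply Finset.sum_le_sum
  intro i _
  simpa [Matrix.mulVec, dotProduct] using
    Finset.sum_mul_sq_le_sq_mul_sq Finset.univ (fun j => A i j) x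

lemma spec_bddAbove (A : Matrix m n ℝ) :
    BddAbove ((fun x => enorm (A.mulVec x)) '' {x : n → ℝ | enorm x ≤ 1}) := by
  refine ⟨max (frob A) 0, ?_⟩
  rintro - ⟨x, hx, rfl⟩
  calc enorm (A.mulVec x) ≤ frob A * enorm x := enorm_mulVec_le_frob A x
  _ ≤ max (frob A) 0 * 1 := by
      apply mul_le_mul (le_max_left _ _) hx (enorm_nonneg x) (le_max_right _ _)
  _ = max (frob A) 0 := mul_one _

lemma spec_nonneg (A : Matrix m n ℝ) : 0 ≤ spec A :=
  Real.sSup_nonneg (by rintro - ⟨x, hx, rfl⟩; exact enorm_nonneg _)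

lemma spec_le {A : Matrix m n ℝ} {c : ℝ} (hc : 0 ≤ c)
    (h : ∀ x : n → ℝ, enorm x ≤ 1 → enorm (A.mulVec x) ≤ c) : spec A ≤ c :=
  Real.sSup_le (by rintro - ⟨x, hx, rfl⟩; exact h x hx) hc

lemma enorm_mulVec_le (A : Matrix m n ℝ) (x : n → ℝ) :
    enorm (A.mulVec x) ≤ spec A * enorm x := by
  rcases eq_or_ne (enorm x) 0 with h | h
  · rw [enorm_eq_zero h]
    simp [Matrix.mulVec_zero, enorm_zero, h]
  · have hx : 0 < enorm x := lt_of_le_of_ne (enorm_nonneg x) (Ne.symm h)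
    set y : n → ℝ := (enorm x)⁻¹ • x with hy
    have hny : enorm y = 1 := by
      rw [hy, enorm_smul, abs_of_pos (by positivity), inv_mul_cancel₀ h]
    have hmem : enorm (A.mulVec y) ∈ (fun x => enorm (A.mulVec x)) '' {x : n → ℝ | enorm x ≤ 1} :=
      ⟨y, le_of_eq hny, rfl⟩
    have hle : enorm (A.mulVec y) ≤ spec A := le_csSup (spec_bddAbove A) hmem
    have hAy : enorm (A.mulVec y) = (enorm x)⁻¹ * enorm (A.mulVec x) := by
      rw [hy, Matrix.mulVec_smul, enorm_smul, abs_of_pos (by positivity)]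
    rw [hAy] at hle
    calc enorm (A.mulVec x) = enorm x * ((enorm x)⁻¹ * enorm (A.mulVec x)) := by
          field_simp
    _ ≤ enorm x * spec A := by apply mul_le_mul_of_nonneg_left hle (le_of_lt hx)
    _ = spec A * enorm x := mul_comm _ _

lemma spec_mul_le (A : Matrix m n ℝ) (B : Matrix n p ℝ) :
    spec (A * B) ≤ spec A * spec B := by
  apply spec_le (mul_nonneg (spec_nonneg A) (spec_nonneg B))
  intro x hx
  rw [← Matrix.mulVec_mulVec]
  calc enorm (A.mulVec (B.mulVec x)) ≤ spec A * enorm (B.mulVec x) := enorm_mulVec_le A _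
  _ ≤ spec A * (spec B * enorm x) := by
      apply mul_le_mul_of_nonneg_left (enorm_mulVec_le B x) (spec_nonneg A)
  _ ≤ spec A * (spec B * 1) := by
      apply mul_le_mul_of_nonneg_left (mul_le_mul_of_nonneg_left hx (spec_nonneg B)) (spec_nonneg A)
  _ = spec A * spec B := by ring

lemma spec_transpose_le (A : Matrix m n ℝ) : spec Aᵀ ≤ spec A := by
  apply spec_le (spec_nonneg A)
  intro x hx
  rcases eq_or_ne (enorm (Aᵀ.mulVec x)) 0 with h | h
  · rw [h]; exact spec_nonneg A
  have hpos : 0 < enorm (Aᵀ.mulVec x) := lt_of_le_of_ne (enorm_nonneg _) (Ne.symm h)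
  have key : enorm (Aᵀ.mulVec x) ^ 2 ≤ spec A * enorm (Aᵀ.mulVec x) := by
    have e1 : enorm (Aᵀ.mulVec x) ^ 2 = (Aᵀ.mulVec x) ⬝ᵥ (Aᵀ.mulVec x) := by
      rw [enorm_sq]; simp [dotProduct, pow_two]
    have e2 : (Aᵀ.mulVec x) ⬝ᵥ (Aᵀ.mulVec x) = x ⬝ᵥ (A.mulVec (Aᵀ.mulVec x)) := by
      rw [dot_mulVec x A (Aᵀ.mulVec x)]
    rw [e1, e2]
    calc x ⬝ᵥ (A.mulVec (Aᵀ.mulVec x)) ≤ enorm x * enorm (A.mulVec (Aᵀ.mulVec x)) := dot_le _ _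
    _ ≤ 1 * (spec A * enorm (Aᵀ.mulVec x)) := by
        apply mul_le_mul hx (enorm_mulVec_le A _) (enorm_nonneg _) (by norm_num)
    _ = spec A * enorm (Aᵀ.mulVec x) := one_mul _
  nlinarith [key, hpos]

lemma spec_transpose (A : Matrix m n ℝ) : spec Aᵀ = spec A :=
  le_antisymm (spec_transpose_le A) (by simpa using spec_transpose_le Aᵀ)


lemma sum_sq_mulVec_le (A : Matrix m n ℝ) (x : n → ℝ) :
    ∑ i, (A.mulVec x) i ^ 2 ≤ spec A ^ 2 * ∑ j, x j ^ 2 := by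
  have h := pow_le_pow_left₀ (enorm_nonneg (A.mulVec x)) (enorm_mulVec_le A x) 2
  rw [mul_pow, enorm_sq, enorm_sq] at h
  exact h

lemma spec_submatrix_le {m' n' : Type*} [Fintype m'] [Fintype n']
    (A : Matrix m n ℝ) (f : m' → m) (g : n' → n) (hf : Function.Injective f)
    (hg : Function.Injective g) : spec (A.submatrix f g) ≤ spec A := by
  classical
  apply spec_le (spec_nonneg A)
  intro x hx
  set xb : n → ℝ := fun j => if h : ∃ j', g j' = j then x h.choose else 0 with hxb
  have hxbg : ∀ j', xb (g j') = x j' := by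
    intro j'
    have h : ∃ j'', g j'' = g j' := ⟨j', rfl⟩
    have : h.choose = j' := hg h.choose_spec
    simp [hxb, dif_pos h, this]
  have hxb0 : ∀ j, (¬ ∃ j', g j' = j) → xb j = 0 := by
    intro j hj; simp [hxb, dif_neg hj]
  have himg : ∀ (F : n → ℝ), (∀ j, (¬ ∃ j', g j' = j) → F j = 0) →
      ∑ j, F j = ∑ j', F (g j') := by
    intro F hF
    rw [← Finset.sum_image (f := F) (g := g) (fun a _ b _ h => hg h)]
    refine (Finset.sum_subset (Finset.subset_univ _) ?_).symm
    intro j _ hj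
    refine hF j fun ⟨j', hj'⟩ => hj (Finset.mem_image.mpr ⟨j', Finset.mem_univ _, hj'⟩)
  have hsum : ∑ j, xb j ^ 2 = ∑ j', x j' ^ 2 := by
    rw [himg (fun j => xb j ^ 2) (fun j hj => by show xb j ^ 2 = 0; rw [hxb0 j hj]; ring)]
    exact Finset.sum_congr rfl fun j' _ => by rw [hxbg]
  have hxble : enorm xb ≤ 1 := by
    rw [enorm_le_iff (by norm_num)]
    rw [hsum]
    have := (enorm_le_iff (by norm_num : (0:ℝ) ≤ 1)).mp hx
    simpa using this
  have hmv : ∀ i', ((A.submatrix f g).mulVec x) i' = (A.mulVec xb) (f i') := by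
    intro i'
    simp only [Matrix.mulVec, dotProduct, Matrix.submatrix_apply]
    rw [himg (fun j => A (f i') j * xb j) (fun j hj => by show A (f i') j * xb j = 0; rw [hxb0 j hj]; ring)]
    exact (Finset.sum_congr rfl fun j' _ => by rw [hxbg]).symm
  rw [enorm_le_iff (spec_nonneg A)]
  calc ∑ i', ((A.submatrix f g).mulVec x) i' ^ 2 = ∑ i', (A.mulVec xb) (f i') ^ 2 := by
        exact Finset.sum_congr rfl fun i' _ => by rw [hmv]
  _ = ∑ i ∈ Finset.univ.image f, (A.mulVec xb) i ^ 2 := by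
        rw [Finset.sum_image (fun a _ b _ h => hf h)]
  _ ≤ ∑ i, (A.mulVec xb) i ^ 2 := by
        apply Finset.sum_le_sum_of_subset_of_nonneg (Finset.subset_univ _)
        intro i _ _; positivity
  _ ≤ spec A ^ 2 * ∑ j, xb j ^ 2 := sum_sq_mulVec_le A xb
  _ ≤ spec A ^ 2 * 1 := by
        apply mul_le_mul_of_nonneg_left _ (by positivity)
        have := (enorm_le_iff (by norm_num : (0:ℝ) ≤ 1)).mp hxble
        simpa using this
  _ = spec A ^ 2 := mul_one _

lemma spec_orthonormal_le_one {r : Type*} [Fintype r] [DecidableEq r] (W : Matrix m r ℝ)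
    (h : Wᵀ * W = 1) : spec W ≤ 1 := by
  apply spec_le (by norm_num)
  intro x hx
  rw [enorm_le_iff (by norm_num : (0:ℝ) ≤ 1)]
  have e1 : ∑ i, (W.mulVec x) i ^ 2 = (W.mulVec x) ⬝ᵥ (W.mulVec x) := by
    simp [dotProduct, pow_two]
  have e2 : (W.mulVec x) ⬝ᵥ (W.mulVec x) = x ⬝ᵥ x := by
    rw [dot_mulVec (W.mulVec x) W x, Matrix.mulVec_mulVec, h, Matrix.one_mulVec]
  rw [e1, e2]
  have := (enorm_le_iff (by norm_num : (0:ℝ) ≤ 1)).mp hx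
  simpa [dotProduct, pow_two] using this

lemma spec_orthonormal_transpose_le_one {r : Type*} [Fintype r] [DecidableEq r] (W : Matrix m r ℝ)
    (h : Wᵀ * W = 1) : spec Wᵀ ≤ 1 :=
  (spec_transpose_le W).trans (spec_orthonormal_le_one W h)

section Kron
variable {m' n' : Type*} [Fintype m'] [Fintype n'] [DecidableEq m'] [DecidableEq n]

lemma spec_kron_one_le (M : Matrix m n ℝ) :
    spec (Matrix.kroneckerMap (· * ·) M (1 : Matrix m' m' ℝ)) ≤ spec M := by
  apply spec_le (spec_nonneg M)
  intro v hv
  have hmv : ∀ a b, ((Matrix.kroneckerMap (· * ·) M (1 : Matrix m' m' ℝ)).mulVec v) (a, b)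
      = (M.mulVec fun c => v (c, b)) a := by
    intro a b
    simp only [Matrix.mulVec, dotProduct, Matrix.kroneckerMap_apply]
    rw [Fintype.sum_prod_type]
    simp [Matrix.one_apply, Finset.mul_sum, mul_ite, mul_comm]
  rw [enorm_le_iff (spec_nonneg M), Fintype.sum_prod_type]
  have hv2 := (enorm_le_iff (by norm_num : (0:ℝ) ≤ 1)).mp hv
  rw [Fintype.sum_prod_type] at hv2
  calc ∑ a, ∑ b, ((Matrix.kroneckerMap (· * ·) M (1 : Matrix m' m' ℝ)).mulVec v) (a, b) ^ 2
      = ∑ b, ∑ a, ((M.mulVec fun c => v (c, b)) a) ^ 2 := by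
        rw [Finset.sum_comm]
        exact Finset.sum_congr rfl fun b _ => Finset.sum_congr rfl fun a _ => by rw [hmv]
  _ ≤ ∑ b, spec M ^ 2 * ∑ c, v (c, b) ^ 2 := by
        exact Finset.sum_le_sum fun b _ => sum_sq_mulVec_le M _
  _ = spec M ^ 2 * ∑ c, ∑ b, v (c, b) ^ 2 := by
        rw [← Finset.mul_sum, Finset.sum_comm]
  _ ≤ spec M ^ 2 * 1 := by
        apply mul_le_mul_of_nonneg_left _ (by positivity)
        simpa using hv2
  _ = spec M ^ 2 := mul_one _

lemma spec_one_kron_le (N : Matrix m' n' ℝ) [DecidableEq m] :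
    spec (Matrix.kroneckerMap (· * ·) (1 : Matrix m m ℝ) N) ≤ spec N := by
  apply spec_le (spec_nonneg N)
  intro v hv
  have hmv : ∀ a b, ((Matrix.kroneckerMap (· * ·) (1 : Matrix m m ℝ) N).mulVec v) (a, b)
      = (N.mulVec fun d => v (a, d)) b := by
    intro a b
    simp only [Matrix.mulVec, dotProduct, Matrix.kroneckerMap_apply]
    rw [Fintype.sum_prod_type]
    simp [Matrix.one_apply, Finset.sum_ite_eq, ite_mul]
  rw [enorm_le_iff (spec_nonneg N), Fintype.sum_prod_type]
  have hv2 := (enorm_le_iff (by norm_num : (0:ℝ) ≤ 1)).mp hv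
  rw [Fintype.sum_prod_type] at hv2
  calc ∑ a, ∑ b, ((Matrix.kroneckerMap (· * ·) (1 : Matrix m m ℝ) N).mulVec v) (a, b) ^ 2
      = ∑ a, ∑ b, ((N.mulVec fun d => v (a, d)) b) ^ 2 := by
        exact Finset.sum_congr rfl fun a _ => Finset.sum_congr rfl fun b _ => by rw [hmv]
  _ ≤ ∑ a, spec N ^ 2 * ∑ d, v (a, d) ^ 2 := by
        exact Finset.sum_le_sum fun a _ => sum_sq_mulVec_le N _
  _ = spec N ^ 2 * ∑ a, ∑ d, v (a, d) ^ 2 := by rw [← Finset.mul_sum]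
  _ ≤ spec N ^ 2 * 1 := by
        apply mul_le_mul_of_nonneg_left _ (by positivity)
        simpa using hv2
  _ = spec N ^ 2 := mul_one _

lemma spec_kron2_le [DecidableEq m] (M : Matrix m n ℝ) (N : Matrix m' n' ℝ) :
    spec (Matrix.kroneckerMap (· * ·) M N) ≤ spec M * spec N := by
  classical
  have he : Matrix.kroneckerMap (· * ·) M N
      = Matrix.kroneckerMap (· * ·) M (1 : Matrix m' m' ℝ)
        * Matrix.kroneckerMap (· * ·) (1 : Matrix n n ℝ) N := by
    rw [← Matrix.mul_kronecker_mul, Matrix.mul_one, Matrix.one_mul]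
  rw [he]
  calc spec (Matrix.kroneckerMap (· * ·) M (1 : Matrix m' m' ℝ)
        * Matrix.kroneckerMap (· * ·) (1 : Matrix n n ℝ) N)
      ≤ spec (Matrix.kroneckerMap (· * ·) M (1 : Matrix m' m' ℝ))
        * spec (Matrix.kroneckerMap (· * ·) (1 : Matrix n n ℝ) N) := spec_mul_le _ _
  _ ≤ spec M * spec N := by
      apply mul_le_mul (spec_kron_one_le M) (spec_one_kron_le N) (spec_nonneg _) (spec_nonneg _)

end Kron


lemma prod_split_s7 {J : Type*} [Fintype J] [DecidableEq J] (j₀ : J) (f : J → ℝ) :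
    ∏ j, f j = f j₀ * ∏ j : {j : J // j ≠ j₀}, f j.1 := by
  rw [Fintype.prod_eq_mul_prod_compl j₀ f]
  congr 1
  rw [Finset.prod_subtype (p := fun j => j ≠ j₀) {j₀}ᶜ (fun x => by simp) f]

lemma spec_one_le {p : Type*} [Fintype p] [DecidableEq p] : spec (1 : Matrix p p ℝ) ≤ 1 := by
  apply spec_le (by norm_num)
  intro x hx
  rwa [Matrix.one_mulVec]

lemma spec_kronPi_aux (k : ℕ) : ∀ (J : Type) (_ : Fintype J) (_ : DecidableEq J)
    (κ lam : J → Type) (_ : ∀ j, Fintype (κ j)) (_ : ∀ j, Fintype (lam j))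
    (_ : ∀ j, DecidableEq (κ j)) (_ : ∀ j, DecidableEq (lam j))
    (M : ∀ j, Matrix (κ j) (lam j) ℝ), Fintype.card J = k →
    spec (Matrix.of fun (a : ∀ j, κ j) (b : ∀ j, lam j) => ∏ j, M j (a j) (b j))
      ≤ ∏ j, spec (M j) := by
  induction k with
  | zero =>
    intro J hJf hJd κ lam hκf hlamf hκd hlamd M hcard
    have hempty : IsEmpty J := Fintype.card_eq_zero_iff.mp hcard
    have h1 : (Matrix.of fun (a : ∀ j, κ j) (b : ∀ j, lam j) => ∏ j, M j (a j) (b j))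
        = (1 : Matrix (∀ j, κ j) (∀ j, κ j) ℝ).submatrix id
          (fun b j => (hempty.elim j : κ j)) := by
      ext a b
      have hab : a = fun j => (hempty.elim j : κ j) := funext fun j => hempty.elim j
      rw [Matrix.submatrix_apply, id_eq, Matrix.one_apply, if_pos hab, Matrix.of_apply,
        Finset.univ_eq_empty, Finset.prod_empty]
    rw [h1, Finset.univ_eq_empty, Finset.prod_empty]
    refine (spec_submatrix_le _ _ _ (fun a b _ => ?_) (fun a b _ => ?_)).trans spec_one_le
    · exact funext fun j => hempty.elim j
    · exact funext fun j => hempty.elim j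
  | succ k ih =>
    intro J hJf hJd κ lam hκf hlamf hκd hlamd M hcard
    have hpos : 0 < Fintype.card J := by omega
    obtain ⟨j₀⟩ := Fintype.card_pos_iff.mp hpos
    have hcard' : Fintype.card {j : J // j ≠ j₀} = k := by
      have h1 : Fintype.card {j : J // ¬ j = j₀}
          = Fintype.card J - Fintype.card {j : J // j = j₀} := Fintype.card_subtype_compl _
      rw [Fintype.card_subtype_eq, hcard] at h1
      simpa using h1
    set K' : Matrix (∀ j : {j : J // j ≠ j₀}, κ j.1) (∀ j : {j : J // j ≠ j₀}, lam j.1) ℝ :=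
      Matrix.of fun a b => ∏ j : {j : J // j ≠ j₀}, M j.1 (a j) (b j) with hK'
    have hIH : spec K' ≤ ∏ j : {j : J // j ≠ j₀}, spec (M j.1) :=
      ih {j : J // j ≠ j₀} inferInstance inferInstance _ _ inferInstance inferInstance
        inferInstance inferInstance (fun j => M j.1) hcard'
    have hsub : (Matrix.of fun (a : ∀ j, κ j) (b : ∀ j, lam j) => ∏ j, M j (a j) (b j))
        = (Matrix.kroneckerMap (· * ·) (M j₀) K').submatrix
            (Equiv.piSplitAt j₀ κ) (Equiv.piSplitAt j₀ lam) := by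
      ext a b
      simp only [Matrix.of_apply, Matrix.submatrix_apply, Matrix.kroneckerMap_apply,
        Equiv.piSplitAt_apply, hK']
      exact prod_split_s7 j₀ _
    rw [hsub, prod_split_s7 j₀ (fun j => spec (M j))]
    refine (spec_submatrix_le _ _ _ (Equiv.piSplitAt j₀ κ).injective
      (Equiv.piSplitAt j₀ lam).injective).trans ?_
    refine (spec_kron2_le (M j₀) K').trans ?_
    exact mul_le_mul_of_nonneg_left hIH (spec_nonneg _)

lemma spec_kronPi {J : Type} [Fintype J] [DecidableEq J]
    {κ lam : J → Type} [∀ j, Fintype (κ j)] [∀ j, Fintype (lam j)]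
    [∀ j, DecidableEq (κ j)] [∀ j, DecidableEq (lam j)]
    (M : ∀ j, Matrix (κ j) (lam j) ℝ) :
    spec (Matrix.of fun (a : ∀ j, κ j) (b : ∀ j, lam j) => ∏ j, M j (a j) (b j))
      ≤ ∏ j, spec (M j) :=
  spec_kronPi_aux (Fintype.card J) J inferInstance inferInstance κ lam inferInstance inferInstance inferInstance inferInstance M rfl

end SpecLemmas

section MoreSpec
variable {m' r' : Type*} [Fintype m'] [Fintype r']

lemma rank_eq_zero_of {A : Matrix m' r' ℝ} (h : A.rank = 0) : A = 0 := by
  classical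
  rw [Matrix.rank] at h
  have h1 : LinearMap.range A.mulVecLin = ⊥ := Submodule.finrank_eq_zero.mp h
  have h2 : A.mulVecLin = 0 := LinearMap.range_eq_bot.mp h1
  ext i j
  have := congrFun (congrArg (fun f => f (Pi.single j 1)) (congrArg DFunLike.coe h2)) i
  simpa [Matrix.mulVecLin, Matrix.mulVec_single] using this

lemma sval_one_eq_spec (A : Matrix m' r' ℝ) : sval 1 A = spec A := by
  have hset : {B : Matrix m' r' ℝ | B.rank < 1} = {0} := by
    ext B
    simp only [Set.mem_setOf_eq, Nat.lt_one_iff, Set.mem_singleton_iff]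
    constructor
    · exact fun h => rank_eq_zero_of h
    · rintro rfl; exact Matrix.rank_zero
  rw [sval, hset, Set.image_singleton, csInf_singleton, sub_zero]

lemma spec_mask_mul_le [DecidableEq m'] (W : Matrix m' r' ℝ) (I : Finset m') :
    spec ((Matrix.of fun a b => (if a ∈ I then (1:ℝ) else 0) * (if a = b then 1 else 0)) * W)
      ≤ spec (rowsub W I) := by
  apply spec_le (spec_nonneg _)
  intro x hx
  have hent : ∀ a b, ((Matrix.of fun a b => (if a ∈ I then (1:ℝ) else 0)
      * (if a = b then 1 else 0)) * W) a b = (if a ∈ I then (1:ℝ) else 0) * W a b := by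
    intro a b
    rw [Matrix.mul_apply, Fintype.sum_eq_single a]
    · simp
    · intro c hc
      simp [Ne.symm hc]
  have hDW : ∀ a, (((Matrix.of fun a b => (if a ∈ I then (1:ℝ) else 0)
      * (if a = b then 1 else 0)) * W).mulVec x) a
      = (if a ∈ I then (1:ℝ) else 0) * (W.mulVec x) a := by
    intro a
    simp only [Matrix.mulVec, dotProduct, hent, Finset.mul_sum, mul_assoc]
  rw [enorm_le_iff (spec_nonneg _)]
  have hx2 : ∑ j, x j ^ 2 ≤ 1 := by
    have := (enorm_le_iff (by norm_num : (0:ℝ) ≤ 1)).mp hx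
    simpa using this
  calc ∑ a, (((Matrix.of fun a b => (if a ∈ I then (1:ℝ) else 0)
        * (if a = b then 1 else 0)) * W).mulVec x) a ^ 2
      = ∑ a, (if a ∈ I then ((W.mulVec x) a)^2 else 0) := by
        apply Finset.sum_congr rfl
        intro a _
        rw [hDW]
        by_cases h : a ∈ I <;> simp [h]
  _ = ∑ a ∈ I, ((W.mulVec x) a)^2 := by
        rw [Finset.sum_ite_mem, Finset.univ_inter]
  _ = ∑ a : {y // y ∈ I}, ((W.mulVec x) a.1)^2 := by
        rw [Finset.sum_coe_sort I (fun a => ((W.mulVec x) a)^2)]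
  _ = ∑ a : {y // y ∈ I}, (((rowsub W I).mulVec x) a)^2 := by
        apply Finset.sum_congr rfl
        intro a _
        congr 1
  _ ≤ spec (rowsub W I) ^ 2 * ∑ j, x j ^ 2 := sum_sq_mulVec_le _ _
  _ ≤ spec (rowsub W I) ^ 2 * 1 := by
        apply mul_le_mul_of_nonneg_left hx2 (by positivity)
  _ = spec (rowsub W I) ^ 2 := mul_one _

end MoreSpec

section TensorSpec
variable {n : ℕ}

lemma spec_unfold_le_tsmax {ι : Fin n → Type*} [∀ i, Fintype (ι i)]
    [∀ i, DecidableEq (ι i)] (A : ((i : Fin n) → ι i) → ℝ) (i : Fin n) :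
    spec (unfold A i) ≤ tsmax A := by
  rw [tsmax]
  calc spec (unfold A i) = sval 1 (unfold A i) := (sval_one_eq_spec _).symm
  _ ≤ ⨆ j, sval 1 (unfold A j) :=
      le_ciSup (f := fun j => sval 1 (unfold A j)) (Set.Finite.bddAbove (Set.finite_range _)) i

end TensorSpec

section TensorLemmas
variable {n : ℕ}

/-- assembling an index function from a mode-`k` coordinate and the rest -/
def asm {ι : Fin n → Type*} (k : Fin n) (x : ι k) (y : (j : {j : Fin n // j ≠ k}) → ι j.1) :
    (i : Fin n) → ι i :=
  fun i => if h : i = k then cast (congrArg ι h.symm) x else y ⟨i, h⟩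

lemma unfold_apply_s7 {ι : Fin n → Type*} (A : ((i : Fin n) → ι i) → ℝ) (k : Fin n)
    (x : ι k) (y : (j : {j : Fin n // j ≠ k}) → ι j.1) :
    unfold A k x y = A (asm k x y) := rfl

@[simp] lemma asm_self {ι : Fin n → Type*} (k : Fin n) (x : ι k)
    (y : (j : {j : Fin n // j ≠ k}) → ι j.1) : asm k x y k = x := by
  simp [asm]

@[simp] lemma asm_ne {ι : Fin n → Type*} (k : Fin n) (x : ι k)
    (y : (j : {j : Fin n // j ≠ k}) → ι j.1) (i : Fin n) (h : i ≠ k) :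
    asm k x y i = y ⟨i, h⟩ := by
  simp [asm, h]

lemma asm_eta {ι : Fin n → Type*} (k : Fin n) (x : (i : Fin n) → ι i) :
    asm k (x k) (fun j => x j.1) = x := by
  funext i
  by_cases h : i = k
  · subst h; simp
  · simp [h]

lemma update_asm {ι : Fin n → Type*} [DecidableEq (Fin n)] (k : Fin n) (x : ι k) (c : ι k)
    (y : (j : {j : Fin n // j ≠ k}) → ι j.1) :
    Function.update (asm k x y) k c = asm k c y := by
  funext i
  by_cases h : i = k
  · subst h; simp
  · rw [Function.update_of_ne h, asm_ne _ _ _ _ h, asm_ne _ _ _ _ h]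

lemma piSplitAt_symm_eq_asm {ι : Fin n → Type*} (k : Fin n) (c : ι k)
    (w : (j : {j : Fin n // j ≠ k}) → ι j.1) :
    (Equiv.piSplitAt k ι).symm (c, w) = asm k c w := by
  funext i
  by_cases h : i = k
  · subst h; simp [Equiv.piSplitAt_symm_apply, asm]
  · simp [Equiv.piSplitAt_symm_apply, asm, h]

lemma update_eq_asm {ι : Fin n → Type*} (k : Fin n) (x : (i : Fin n) → ι i) (c : ι k) :
    Function.update x k c = asm k c (fun j => x j.1) := by
  funext i
  by_cases h : i = k
  · subst h; simp
  · rw [Function.update_of_ne h, asm_ne _ _ _ _ h]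

lemma prod_split_at {J : Type*} [Fintype J] [DecidableEq J] (j₀ : J) (f : J → ℝ) :
    ∏ j, f j = f j₀ * ∏ j : {j : J // j ≠ j₀}, f j.1 := by
  rw [Fintype.prod_eq_mul_prod_compl j₀ f]
  congr 1
  rw [Finset.prod_subtype (p := fun j => j ≠ j₀) {j₀}ᶜ (fun x => by simp) f]

lemma tucker_tucker {ι κ μ : Fin n → Type*} [∀ i, Fintype (ι i)] [∀ i, Fintype (κ i)]
    [∀ i, Fintype (μ i)] (A : ((i : Fin n) → μ i) → ℝ)
    (Q : (i : Fin n) → Matrix (κ i) (μ i) ℝ) (M : (i : Fin n) → Matrix (ι i) (κ i) ℝ) :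
    tucker (tucker A Q) M = tucker A (fun j => M j * Q j) := by
  funext x
  unfold tucker
  simp only [Finset.mul_sum]
  rw [Finset.sum_comm]
  apply Finset.sum_congr rfl
  intro z _
  have h1 : ∀ y : (i : Fin n) → κ i, (∏ j, M j (x j) (y j)) * ((∏ j, Q j (y j) (z j)) * A z)
      = (∏ j, M j (x j) (y j) * Q j (y j) (z j)) * A z := by
    intro y; rw [← mul_assoc, ← Finset.prod_mul_distrib]
  rw [Finset.sum_congr rfl fun y _ => h1 y, ← Finset.sum_mul]
  congr 1
  simp only [Matrix.mul_apply]
  rw [Finset.prod_univ_sum]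
  rw [Fintype.piFinset_univ]

lemma tucker_diag {ι : Fin n → Type*} [∀ i, Fintype (ι i)] [∀ i, DecidableEq (ι i)]
    (A : ((i : Fin n) → ι i) → ℝ) (w : (j : Fin n) → ι j → ℝ) (x : (i : Fin n) → ι i) :
    tucker A (fun j => Matrix.of fun a b => w j a * (if a = b then 1 else 0)) x
      = (∏ j, w j (x j)) * A x := by
  unfold tucker
  rw [Fintype.sum_eq_single x]
  · simp
  · intro y hy
    obtain ⟨j, hj⟩ := Function.ne_iff.mp hy
    rw [Finset.prod_eq_zero (Finset.mem_univ j)]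
    · ring
    · have : x j ≠ y j := fun h => hj h.symm
      simp [Matrix.of_apply, if_neg this]

lemma unfold_tucker {ι κ : Fin n → Type*} [∀ i, Fintype (ι i)] [∀ i, Fintype (κ i)]
    (T : ((i : Fin n) → κ i) → ℝ) (M : (i : Fin n) → Matrix (ι i) (κ i) ℝ) (i : Fin n) :
    unfold (tucker T M) i
      = M i * (unfold T i *
          (Matrix.of fun (z : (j : {j : Fin n // j ≠ i}) → ι j.1)
            (v : (j : {j : Fin n // j ≠ i}) → κ j.1) => ∏ j, M j.1 (z j) (v j))ᵀ) := by
  ext x z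
  simp only [Matrix.mul_apply, Matrix.transpose_apply, Matrix.of_apply]
  rw [show unfold (tucker T M) i x z = tucker T M (asm i x z) from rfl]
  unfold tucker
  rw [Fintype.sum_equiv (Equiv.piSplitAt i κ)
    (fun y => (∏ j, M j (asm i x z j) (y j)) * T y)
    (fun p => (∏ j, M j (asm i x z j) ((Equiv.piSplitAt i κ).symm p j))
      * T ((Equiv.piSplitAt i κ).symm p))
    (fun y => by simp only [Equiv.symm_apply_apply])]
  rw [Fintype.sum_prod_type]
  apply Finset.sum_congr rfl
  intro c _
  rw [Finset.mul_sum]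
  apply Finset.sum_congr rfl
  intro v _
  rw [piSplitAt_symm_eq_asm]
  have hT : T (asm i c v) = unfold T i c v := rfl
  have hprod : (∏ j, M j (asm i x z j) (asm i c v j))
      = M i x c * ∏ j : {j : Fin n // j ≠ i}, M j.1 (z j) (v j) := by
    rw [prod_split_at i]
    congr 1
    · rw [asm_self, asm_self]
    · apply Finset.prod_congr rfl
      intro j _
      rw [asm_ne _ _ _ _ j.2, asm_ne _ _ _ _ j.2]
  rw [hT, hprod]
  ring

lemma tucker_one {ι : Fin n → Type*} [∀ i, Fintype (ι i)] [∀ i, DecidableEq (ι i)]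
    (A : ((i : Fin n) → ι i) → ℝ) :
    tucker A (fun j => (1 : Matrix (ι j) (ι j) ℝ)) = A := by
  funext x
  have h1 : (fun j => (1 : Matrix (ι j) (ι j) ℝ))
      = fun j => Matrix.of fun a b => (1 : ℝ) * (if a = b then 1 else 0) := by
    funext j
    ext a b
    simp [Matrix.one_apply]
  rw [h1, tucker_diag]
  simp

lemma tucker_update_one {d : Fin n → ℕ} (A : ((i : Fin n) → Fin (d i)) → ℝ) (k : Fin n)
    (Q : Matrix (Fin (d k)) (Fin (d k)) ℝ)
    (hQ : ∀ x, ∑ b, Q (x k) b * A (Function.update x k b) = A x)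
    (x : (i : Fin n) → Fin (d i)) :
    tucker A (Function.update (fun j => (1 : Matrix (Fin (d j)) (Fin (d j)) ℝ)) k Q) x
      = A x := by
  set E := Function.update (fun j => (1 : Matrix (Fin (d j)) (Fin (d j)) ℝ)) k Q with hE
  unfold tucker
  rw [Fintype.sum_equiv (Equiv.piSplitAt k (fun i => Fin (d i)))
    (fun y => (∏ j, E j (x j) (y j)) * A y)
    (fun p => (∏ j, E j (x j) ((Equiv.piSplitAt k (fun i => Fin (d i))).symm p j))
      * A ((Equiv.piSplitAt k (fun i => Fin (d i))).symm p))
    (fun y => by simp only [Equiv.symm_apply_apply])]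
  rw [Fintype.sum_prod_type]
  have hstep : ∀ c : Fin (d k),
      (∑ w : (j : {j : Fin n // j ≠ k}) → Fin (d j.1),
        (∏ j, E j (x j) ((Equiv.piSplitAt k (fun i => Fin (d i))).symm (c, w) j))
        * A ((Equiv.piSplitAt k (fun i => Fin (d i))).symm (c, w)))
      = Q (x k) c * A (Function.update x k c) := by
    intro c
    rw [Fintype.sum_eq_single (fun j : {j : Fin n // j ≠ k} => x j.1)]
    · rw [piSplitAt_symm_eq_asm, ← update_eq_asm]
      congr 1
      rw [prod_split_at k]
      have hupk : Function.update x k c k = c := Function.update_self k c x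
      have h2 : (∏ j : {j : Fin n // j ≠ k}, E j.1 (x j.1) (Function.update x k c j.1)) = 1 := by
        apply Finset.prod_eq_one
        intro j _
        rw [hE, Function.update_of_ne j.2, Function.update_of_ne j.2, Matrix.one_apply_eq]
      rw [h2, hupk, hE, Function.update_self, mul_one]
    · intro w hw
      obtain ⟨j, hj⟩ := Function.ne_iff.mp hw
      rw [piSplitAt_symm_eq_asm]
      rw [Finset.prod_eq_zero (Finset.mem_univ j.1)]
      · ring
      · rw [hE, Function.update_of_ne j.2, asm_ne _ _ _ _ j.2, Matrix.one_apply]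
        have : x j.1 ≠ w j := by
          intro h
          exact hj (by simpa using h.symm)
        simp [this]
  rw [Finset.sum_congr rfl fun c _ => hstep c]
  exact hQ x

lemma tucker_proj_eq_self {d : Fin n → ℕ} (A : ((i : Fin n) → Fin (d i)) → ℝ)
    (Q : (j : Fin n) → Matrix (Fin (d j)) (Fin (d j)) ℝ)
    (hQ : ∀ (j : Fin n) (x : (i : Fin n) → Fin (d i)),
      ∑ b, Q j (x j) b * A (Function.update x j b) = A x) :
    tucker A Q = A := by
  suffices h : ∀ k : ℕ, k ≤ n →
      tucker A (fun j => if j.val < k then Q j else 1) = A by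
    have hn := h n le_rfl
    have : (fun j : Fin n => if j.val < n then Q j else 1) = Q := by
      funext j
      rw [if_pos j.isLt]
    rwa [this] at hn
  intro k
  induction k with
  | zero =>
    intro _
    have h0 : (fun j : Fin n => if j.val < 0 then Q j else 1)
        = fun j => (1 : Matrix (Fin (d j)) (Fin (d j)) ℝ) := by
      funext j; simp
    rw [h0, tucker_one]
  | succ k ih =>
    intro hk
    have hkn : k < n := hk
    set k' : Fin n := ⟨k, hkn⟩ with hk'
    have hcomp := tucker_tucker A (fun j => if j.val < k then Q j else 1)
      (Function.update (fun j => (1 : Matrix (Fin (d j)) (Fin (d j)) ℝ)) k' (Q k'))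
    rw [ih (le_of_lt hkn)] at hcomp
    have hM : (fun j => Function.update
          (fun j => (1 : Matrix (Fin (d j)) (Fin (d j)) ℝ)) k' (Q k') j
          * (if j.val < k then Q j else 1))
        = fun j : Fin n => if j.val < k + 1 then Q j else 1 := by
      funext j
      by_cases h : j = k'
      · subst h
        rw [Function.update_self, if_neg (by simp [hk']), mul_one, if_pos (by simp [hk'])]
      · rw [Function.update_of_ne h, one_mul]
        have hne : j.val ≠ k := fun hv => h (Fin.ext (by simp [hk', hv]))
        by_cases h2 : j.val < k
        · rw [if_pos h2, if_pos (by omega)]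
        · rw [if_neg h2, if_neg (by omega)]
    rw [hM] at hcomp
    rw [← hcomp]
    funext x
    exact tucker_update_one A k' (Q k') (hQ k') x

end TensorLemmas

/-- With HOSVD `A = 𝒯 ×₁ W₁ ⋯ ×ₙ Wₙ` and `ℛ = A(I₁,…,Iₙ)`, one has
`‖ℛ_(i)‖₂ ≤ σ_max(A) · ∏ⱼ ‖Wⱼ(Iⱼ,:)‖₂` for each `i`,
where `σ_max(A) = max_j σ₁(A_(j))`. -/
theorem chidori_core_norm_bound {n : ℕ} {d : Fin n → ℕ}
    (A : ((i : Fin n) → Fin (d i)) → ℝ) (r : Fin n → ℕ)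
    (hrank : ∀ i, (unfold A i).rank = r i)
    (W : (i : Fin n) → Matrix (Fin (d i)) (Fin (r i)) ℝ)
    (S : (i : Fin n) → Matrix (Fin (r i)) (Fin (r i)) ℝ)
    (V : (i : Fin n) → Matrix ((j : {j : Fin n // j ≠ i}) → Fin (d j.1)) (Fin (r i)) ℝ)
    (hSVD : ∀ i, CompactSVD (unfold A i) (W i) (S i) (V i))
    (hHOSVD : A = tucker (tucker A fun i => (W i)ᵀ) W)
    (I : (i : Fin n) → Finset (Fin (d i))) :
    ∀ i, spec (unfold (subT A I) i) ≤
      tsmax A * ∏ j, spec (rowsub (W j) (I j)) := by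
  intro i
  classical
  set Dm : (j : Fin n) → Matrix (Fin (d j)) (Fin (d j)) ℝ :=
    fun j => Matrix.of fun a b => (if a ∈ I j then (1:ℝ) else 0) * (if a = b then 1 else 0)
    with hDm
  set P : (j : Fin n) → Matrix (Fin (d j)) (Fin (d j)) ℝ :=
    fun j => (Dm j * W j) * (W j)ᵀ with hPdef
  have hfib : ∀ (j : Fin n) (x : (i' : Fin n) → Fin (d i')),
      ∑ b, (W j * (W j)ᵀ) (x j) b * A (Function.update x j b) = A x := by
    intro j x
    obtain ⟨hA, hW, -, -, -⟩ := hSVD j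
    have hproj : (W j * (W j)ᵀ) * unfold A j = unfold A j := by
      calc (W j * (W j)ᵀ) * unfold A j = W j * ((W j)ᵀ * unfold A j) := Matrix.mul_assoc _ _ _
      _ = W j * ((W j)ᵀ * (W j * (S j * (V j)ᵀ))) := by rw [hA, Matrix.mul_assoc]
      _ = W j * (((W j)ᵀ * W j) * (S j * (V j)ᵀ)) := by rw [Matrix.mul_assoc]
      _ = W j * (S j * (V j)ᵀ) := by rw [hW, Matrix.one_mul]
      _ = unfold A j := by rw [← Matrix.mul_assoc, ← hA]
    have hentry := congrFun (congrFun hproj (x j)) (fun j' : {j' : Fin n // j' ≠ j} => x j'.1)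
    rw [Matrix.mul_apply] at hentry
    calc ∑ b, (W j * (W j)ᵀ) (x j) b * A (Function.update x j b)
        = ∑ b, (W j * (W j)ᵀ) (x j) b
            * unfold A j b (fun j' : {j' : Fin n // j' ≠ j} => x j'.1) := by
          refine Finset.sum_congr rfl fun b _ => ?_
          rw [unfold_apply_s7, ← update_eq_asm]
    _ = unfold A j (x j) (fun j' : {j' : Fin n // j' ≠ j} => x j'.1) := hentry
    _ = A x := by rw [unfold_apply_s7, asm_eta]
  have hQid : tucker A (fun j => W j * (W j)ᵀ) = A := tucker_proj_eq_self A _ hfib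
  have hPD : tucker A P = tucker A Dm := by
    calc tucker A P = tucker A (fun j => Dm j * (W j * (W j)ᵀ)) := by
          congr 1
          funext j
          simp only [hPdef, Matrix.mul_assoc]
    _ = tucker (tucker A (fun j => W j * (W j)ᵀ)) Dm :=
          (tucker_tucker A (fun j => W j * (W j)ᵀ) Dm).symm
    _ = tucker A Dm := by rw [hQid]
  have hdiag : ∀ x : (j : Fin n) → Fin (d j), tucker A Dm x
      = (∏ j, if x j ∈ I j then (1:ℝ) else 0) * A x := by
    intro x
    rw [hDm]
    exact tucker_diag A (fun j a => if a ∈ I j then (1:ℝ) else 0) x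
  have hsubm : unfold (subT A I) i
      = (unfold (tucker A P) i).submatrix Subtype.val
          (fun z (j : {j : Fin n // j ≠ i}) => (z j).1) := by
    ext x z
    rw [Matrix.submatrix_apply, hPD, unfold_apply_s7, unfold_apply_s7, hdiag]
    have hy : (fun j => Subtype.val (asm (ι := fun j => {v // v ∈ I j}) i x z j))
        = asm (ι := fun j => Fin (d j)) i (Subtype.val x)
            (fun j : {j : Fin n // j ≠ i} => Subtype.val (z j)) := by
      funext j
      by_cases h : j = i
      · subst h; rw [asm_self, asm_self]
      · rw [asm_ne _ _ _ _ h, asm_ne _ _ _ _ h]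
    have hmem : ∀ j, asm (ι := fun j => Fin (d j)) i (Subtype.val x)
        (fun j : {j : Fin n // j ≠ i} => Subtype.val (z j)) j ∈ I j := by
      intro j
      by_cases h : j = i
      · subst h; rw [asm_self]; exact x.2
      · rw [asm_ne _ _ _ _ h]; exact (z ⟨j, h⟩).2
    have hprod : (∏ j, if asm (ι := fun j => Fin (d j)) i (Subtype.val x)
        (fun j : {j : Fin n // j ≠ i} => Subtype.val (z j)) j ∈ I j
          then (1:ℝ) else 0) = 1 :=
      Finset.prod_eq_one fun j _ => if_pos (hmem j)
    rw [hprod, one_mul]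
    exact congrArg A hy
  have hginj : Function.Injective
      (fun (z : (j : {j : Fin n // j ≠ i}) → {v // v ∈ I j.1})
        (j : {j : Fin n // j ≠ i}) => ((z j) : Fin (d j.1))) := by
    intro z z' h
    funext j
    exact Subtype.ext (congrFun h j)
  have hPspec : ∀ j, spec (P j) ≤ spec (rowsub (W j) (I j)) := by
    intro j
    obtain ⟨-, hW, -, -, -⟩ := hSVD j
    calc spec (P j) ≤ spec (Dm j * W j) * spec (W j)ᵀ := by
          simp only [hPdef]
          exact spec_mul_le _ _
    _ ≤ spec (rowsub (W j) (I j)) * 1 := by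
        refine mul_le_mul ?_ (spec_orthonormal_transpose_le_one (W j) hW)
          (spec_nonneg _) (spec_nonneg _)
        simp only [hDm]
        exact spec_mask_mul_le (W j) (I j)
    _ = spec (rowsub (W j) (I j)) := mul_one _
  have hKP : spec (Matrix.of fun (z v : (j : {j : Fin n // j ≠ i}) → Fin (d j.1)) =>
        ∏ j, P j.1 (z j) (v j)) ≤ ∏ j : {j : Fin n // j ≠ i}, spec (P j.1) :=
    spec_kronPi (fun j : {j : Fin n // j ≠ i} => P j.1)
  have hmax : spec (unfold A i) ≤ tsmax A := spec_unfold_le_tsmax A i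
  have htsnn : 0 ≤ tsmax A := (spec_nonneg _).trans hmax
  calc spec (unfold (subT A I) i)
      = spec ((unfold (tucker A P) i).submatrix Subtype.val
          (fun (z : (j : {j : Fin n // j ≠ i}) → {v // v ∈ I j.1}) (j : {j : Fin n // j ≠ i}) => (z j).1)) := by rw [hsubm]
  _ ≤ spec (unfold (tucker A P) i) :=
      spec_submatrix_le _ _ _ Subtype.val_injective hginj
  _ = spec (P i * (unfold A i *
        (Matrix.of fun (z v : (j : {j : Fin n // j ≠ i}) → Fin (d j.1)) =>
          ∏ j, P j.1 (z j) (v j))ᵀ)) := by rw [unfold_tucker]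
  _ ≤ spec (P i) * spec (unfold A i *
        (Matrix.of fun (z v : (j : {j : Fin n // j ≠ i}) → Fin (d j.1)) =>
          ∏ j, P j.1 (z j) (v j))ᵀ) := spec_mul_le _ _
  _ ≤ spec (P i) * (spec (unfold A i) * spec
        (Matrix.of fun (z v : (j : {j : Fin n // j ≠ i}) → Fin (d j.1)) =>
          ∏ j, P j.1 (z j) (v j))ᵀ) :=
      mul_le_mul_of_nonneg_left (spec_mul_le _ _) (spec_nonneg _)
  _ = spec (P i) * (spec (unfold A i) * spec
        (Matrix.of fun (z v : (j : {j : Fin n // j ≠ i}) → Fin (d j.1)) =>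
          ∏ j, P j.1 (z j) (v j))) := by rw [spec_transpose]
  _ ≤ spec (rowsub (W i) (I i))
        * (tsmax A * ∏ j : {j : Fin n // j ≠ i}, spec (rowsub (W j.1) (I j.1))) := by
      refine mul_le_mul (hPspec i) (mul_le_mul hmax (hKP.trans
        (Finset.prod_le_prod (fun j _ => spec_nonneg _) (fun j _ => hPspec j.1)))
        (spec_nonneg _) htsnn) (mul_nonneg (spec_nonneg _) (spec_nonneg _)) (spec_nonneg _)
  _ = tsmax A * ∏ j, spec (rowsub (W j) (I j)) := by
      rw [prod_split_at i (fun j => spec (rowsub (W j) (I j)))]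
      ring


end TCUR
end
end
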